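/- Let μ_σ and μ_τ be [0,1]-valued random variables with E[(μ_σ − μ_τ)²] = ε, and let N ≥ 1 be an integer. Then there exist points 0 = x_0 < x_1 < ⋯ < x_{N−1} < x_N with each interval [x_{k−1}, x_k) of length at most 2/N, such that Pr[k(μ_σ) ≠ k(μ_τ)] ≤ √ε · N, where k(z) is the unique index k with x_{k−1} ≤ z < x_k. -/

import Mathlib

open MeasureTheory Set

/-- Claim: given `[0,1]`-valued random variables `X`, `Z` with `E[(X - Z)²] = ε` and
`N ≥ 1`, there is a partition `0 = x₀ < x₁ < ⋯ < x_N` of `[0,1]` (with `x_N > 1`),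
each `xᵢ` (for `1 ≤ i ≤ N-1`) within `1/(2N)` of `i/N`, each interval of length at
most `2/N`, such that the probability that `X` and `Z` do not fall in a common
interval `[x_k, x_{k+1})` is at most `√ε · N`. -/
theorem partition_same_interval
    {Ω : Type*} {m0 : MeasurableSpace Ω} (μ : Measure Ω) [IsProbabilityMeasure μ]
    (X Z : Ω → ℝ) (hX : Measurable X) (hZ : Measurable Z)
    (hXr : ∀ ω, X ω ∈ Icc (0:ℝ) 1) (hZr : ∀ ω, Z ω ∈ Icc (0:ℝ) 1)
    (ε : ℝ) (hε : ε = ∫ ω, (X ω - Z ω) ^ 2 ∂μ)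
    (N : ℕ) (hN : 1 ≤ N) :
    ∃ x : ℕ → ℝ, x 0 = 0 ∧ 1 < x N ∧
      (∀ i < N, x i < x (i + 1)) ∧
      (∀ i, 1 ≤ i → i ≤ N - 1 → x i ∈ Icc ((i : ℝ)/N - 1/(2*N)) ((i : ℝ)/N + 1/(2*N))) ∧
      (∀ i < N, x (i + 1) - x i ≤ 2 / N) ∧
      (μ {ω | ¬ ∃ k < N, X ω ∈ Ico (x k) (x (k + 1)) ∧ Z ω ∈ Ico (x k) (x (k + 1))}).toReal
        ≤ Real.sqrt ε * N := by
  have hNR : (0:ℝ) < N := by exact_mod_cast hN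
  set L : Ω → ℝ := fun ω => min (X ω) (Z ω) with hLdef
  set M : Ω → ℝ := fun ω => max (X ω) (Z ω) with hMdef
  have hL : Measurable L := hX.min hZ
  have hM : Measurable M := hX.max hZ
  -- the function f
  set f : ℝ → ENNReal := fun t => μ {ω | t ∈ Ioc (L ω) (M ω)} with hfdef
  have hS : MeasurableSet {p : ℝ × Ω | p.1 ∈ Ioc (L p.2) (M p.2)} := by
    apply MeasurableSet.inter
    · exact measurableSet_lt (hL.comp measurable_snd) measurable_fst
    · exact measurableSet_le measurable_fst (hM.comp measurable_snd)
  have hfmeas : Measurable f := measurable_measure_prodMk_left (ν := μ) hS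
  -- total integral of f equals E[M - L]
  have htonelli : ∫⁻ t, f t ∂(volume) = ∫⁻ ω, ENNReal.ofReal (M ω - L ω) ∂μ := by
    have h1 := MeasureTheory.Measure.prod_apply (μ := (volume : Measure ℝ)) (ν := μ) hS
    have h2 := MeasureTheory.Measure.prod_apply_symm (μ := (volume : Measure ℝ)) (ν := μ) hS
    rw [show f = fun t => μ (Prod.mk t ⁻¹' {p : ℝ × Ω | p.1 ∈ Ioc (L p.2) (M p.2)}) from rfl,
      ← h1, h2]
    congr 1; ext ω
    have : ((fun t => (t, ω)) ⁻¹' {p : ℝ × Ω | p.1 ∈ Ioc (L p.2) (M p.2)}) = Ioc (L ω) (M ω) :=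
      rfl
    rw [this, Real.volume_Ioc]
  -- εnonneg
  have hε0 : 0 ≤ ε := by
    rw [hε]; exact integral_nonneg fun ω => sq_nonneg _
  -- Cauchy–Schwarz
  have hCS : ∫⁻ ω, ENNReal.ofReal (M ω - L ω) ∂μ ≤ ENNReal.ofReal (Real.sqrt ε) := by
    have hpq : Real.HolderConjugate 2 2 := by rw [Real.holderConjugate_iff]; constructor <;> norm_num
    have h := ENNReal.lintegral_mul_le_Lp_mul_Lq μ hpq
      (f := fun ω => ENNReal.ofReal (M ω - L ω)) (g := fun _ => 1)
      ((hM.sub hL).ennreal_ofReal.aemeasurable) aemeasurable_const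
    simp only [Pi.mul_apply, mul_one, ENNReal.one_rpow, lintegral_const, measure_univ, one_mul] at h
    have hsq : ∀ ω, ENNReal.ofReal (M ω - L ω) ^ (2:ℝ)
        = ENNReal.ofReal ((X ω - Z ω) ^ 2) := by
      intro ω
      have h0 : (0:ℝ) ≤ M ω - L ω := by
        simp only [hLdef, hMdef]; exact sub_nonneg.mpr (min_le_max)
      rw [ENNReal.ofReal_rpow_of_nonneg h0 (by norm_num : (0:ℝ) ≤ 2)]
      congr 1
      have hml : M ω - L ω = |X ω - Z ω| := by
        simp only [hLdef, hMdef]; rw [max_sub_min_eq_abs, abs_sub_comm]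
      rw [hml, show ((2:ℝ)) = ((2:ℕ):ℝ) by norm_num, Real.rpow_natCast, sq_abs]
    simp only [hsq] at h
    have hint : Integrable (fun ω => (X ω - Z ω) ^ 2) μ := by
      refine Integrable.mono' (integrable_const (1:ℝ))
        ((hX.sub hZ).pow_const 2).aestronglyMeasurable ?_
      filter_upwards with ω
      rw [Real.norm_eq_abs, abs_sq]
      have h1 : |X ω - Z ω| ≤ 1 := by
        rw [abs_sub_le_iff]
        constructor <;> nlinarith [(hXr ω).1, (hXr ω).2, (hZr ω).1, (hZr ω).2]
      nlinarith [abs_nonneg (X ω - Z ω), sq_abs (X ω - Z ω)]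
    have hlint : ∫⁻ ω, ENNReal.ofReal ((X ω - Z ω) ^ 2) ∂μ = ENNReal.ofReal ε := by
      rw [hε, ← ofReal_integral_eq_lintegral_ofReal hint]
      filter_upwards with ω using sq_nonneg _
    rw [hlint] at h
    calc ∫⁻ ω, ENNReal.ofReal (M ω - L ω) ∂μ ≤ ENNReal.ofReal ε ^ ((1:ℝ)/2) := h
      _ = ENNReal.ofReal (Real.sqrt ε) := by
          rw [ENNReal.ofReal_rpow_of_nonneg hε0 (by norm_num : (0:ℝ) ≤ 1/2),
            Real.sqrt_eq_rpow]
  have hN0' : (N:ℝ) ≠ 0 := ne_of_gt hNR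
  have hu0 : 0 < 1/(N:ℝ) := by positivity
  have hNu : (N:ℝ) * (1/N) = 1 := by field_simp
  have h2Nu : 1/(2*(N:ℝ)) = (1/N)/2 := by
    rw [one_div, one_div, mul_inv, mul_comm]
    ring
  -- intervals and selection of points
  set I : ℕ → Set ℝ := fun j => Ioc ((j:ℝ)/N - 1/(2*N)) ((j:ℝ)/N + 1/(2*N)) with hIdef
  have hIvol : ∀ j, volume (I j) = ENNReal.ofReal (1/N) := by
    intro j
    rw [hIdef]
    simp only [Real.volume_Ioc]
    congr 1
    field_simp
    ring
  have hsel : ∀ j : ℕ, ∃ s ∈ I j, f s ≤ ⨍⁻ u in I j, f u ∂volume := by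
    intro j
    refine exists_le_setLAverage ?_ ?_ hfmeas.aemeasurable
    · rw [hIvol]
      simp only [ne_eq, ENNReal.ofReal_eq_zero, not_le]
      positivity
    · rw [hIvol]; exact ENNReal.ofReal_ne_top
  choose t htmem htle using hsel
  have htI : ∀ j : ℕ, (j:ℝ)/N - 1/(2*N) < t j ∧ t j ≤ (j:ℝ)/N + 1/(2*N) := fun j => htmem j
  have hkey : ∀ j, f (t j) ≤ (N : ENNReal) * ∫⁻ u in I j, f u ∂volume := by
    intro j
    refine (htle j).trans ?_
    rw [setLAverage_eq, hIvol]
    have h1 : ENNReal.ofReal (1/(N:ℝ)) = ((N:ENNReal))⁻¹ := by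
      rw [one_div, ENNReal.ofReal_inv_of_pos hNR, ENNReal.ofReal_natCast]
    rw [h1, div_eq_mul_inv, inv_inv, mul_comm]
  -- the partition
  set x : ℕ → ℝ := fun i => if i = 0 then 0 else if i ≤ N - 1 then t i else 1 + 1/(2*N)
    with hxdef
  have hx0 : x 0 = 0 := by simp [hxdef]
  have hxNval : ∀ i, N ≤ i → x i = 1 + 1/(2*N) := by
    intro i hi
    have h1 : i ≠ 0 := by omega
    have h2 : ¬ i ≤ N - 1 := by omega
    simp [hxdef, h1, h2]
  have hxmid : ∀ i, 1 ≤ i → i ≤ N - 1 → x i = t i := by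
    intro i h1 h2
    have h1' : i ≠ 0 := by omega
    simp [hxdef, h1', h2]
  have hxNgt : 1 < x N := by
    rw [hxNval N le_rfl]
    have : 0 < 1/(2*(N:ℝ)) := by positivity
    linarith
  -- strict monotonicity
  have hlt : ∀ i < N, x i < x (i + 1) := by
    intro i hi
    rcases Nat.eq_zero_or_pos i with rfl | hi1
    · rw [hx0]
      rcases Nat.lt_or_ge 1 N with h2 | h2
      · rw [hxmid 1 le_rfl (by omega)]
        have := (htI 1).1
        have h3 : 0 < (1:ℝ)/N - 1/(2*N) := by
          rw [sub_pos]
          rw [div_lt_div_iff₀ (by positivity) hNR]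
          linarith
        linarith
      · have hNeq : N = 1 := by omega
        rw [hxNval 1 (by omega)]
        positivity
    · rw [hxmid i hi1 (by omega)]
      rcases Nat.lt_or_ge (i+1) N with h2 | h2
      · rw [hxmid (i+1) (by omega) (by omega)]
        have ha := (htI i).2
        have hb := (htI (i+1)).1
        have hc : (i:ℝ)/N + 1/(2*N) = ((i:ℕ)+1:ℝ)/N - 1/(2*N) := by
          field_simp
          ring
        push_cast at hb ⊢
        linarith [hc.le]
      · have hieq : i = N - 1 := by omega
        rw [hxNval (i+1) (by omega)]
        have ha := (htI i).2
        have hiN : (i:ℝ) ≤ N - 1 := by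
          have : (i:ℝ) = ((N:ℝ) - 1) := by
            subst hieq
            rw [Nat.cast_sub hN]
            norm_num
          linarith [this.le]
        have hd : (i:ℝ)/N + 1/(2*N) ≤ 1 - 1/(2*N) := by
          have hp := mul_le_mul_of_nonneg_right hiN hu0.le
          rw [sub_mul, hNu, one_mul] at hp
          rw [h2Nu, div_eq_mul_one_div (i:ℝ) (N:ℝ)]
          linarith
        have : 0 < 1/(2*(N:ℝ)) := by positivity
        linarith
  -- interval lengths
  have hlen : ∀ i < N, x (i + 1) - x i ≤ 2 / N := by
    intro i hi
    rcases Nat.eq_zero_or_pos i with rfl | hi1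
    · rw [hx0]
      rcases Nat.lt_or_ge 1 N with h2 | h2
      · rw [hxmid 1 le_rfl (by omega)]
        have := (htI 1).2
        have hd : (1:ℝ)/N + 1/(2*N) ≤ 2/N := by
          rw [div_add_div _ _ hN0' (by positivity : (2*(N:ℝ)) ≠ 0), div_le_div_iff₀ (by positivity) hNR]
          nlinarith
        push_cast at this
        linarith
      · have hNeq : N = 1 := by omega
        rw [hxNval 1 (by omega), hNeq]
        norm_num
    · rw [hxmid i hi1 (by omega)]
      rcases Nat.lt_or_ge (i+1) N with h2 | h2
      · rw [hxmid (i+1) (by omega) (by omega)]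
        have ha := (htI i).1
        have hb := (htI (i+1)).2
        have hc : (((i:ℕ)+1:ℝ))/N + 1/(2*N) - ((i:ℝ)/N - 1/(2*N)) = 2/N := by
          field_simp
          ring
        push_cast at hb hc ⊢
        linarith
      · have hieq : i = N - 1 := by omega
        rw [hxNval (i+1) (by omega)]
        have ha := (htI i).1
        have hiN : (N:ℝ) - 1 ≤ (i:ℝ) := by
          have : (i:ℝ) = ((N:ℝ) - 1) := by
            subst hieq
            rw [Nat.cast_sub hN]
            norm_num
          linarith [this.ge]
        have hd : 1 + 1/(2*N) - ((i:ℝ)/N - 1/(2*N)) ≤ 2/N := by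
          have hp := mul_le_mul_of_nonneg_right hiN hu0.le
          rw [sub_mul, hNu, one_mul] at hp
          rw [h2Nu, div_eq_mul_one_div (i:ℝ) (N:ℝ), div_eq_mul_one_div (2:ℝ) (N:ℝ)]
          linarith
        linarith
  -- midpoint location
  have hloc : ∀ i, 1 ≤ i → i ≤ N - 1 →
      x i ∈ Icc ((i : ℝ)/N - 1/(2*N)) ((i : ℝ)/N + 1/(2*N)) := by
    intro i h1 h2
    rw [hxmid i h1 h2]
    exact ⟨(htI i).1.le, (htI i).2⟩
  -- monotonicity up to N
  have hmon : ∀ b, b ≤ N → ∀ a, a ≤ b → x a ≤ x b := by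
    intro b
    induction b with
    | zero =>
      intro _ a ha
      have : a = 0 := by omega
      subst this
      exact le_rfl
    | succ n ih =>
      intro hbN a ha
      rcases Nat.lt_or_ge a (n+1) with h | h
      · exact (ih (by omega) a (by omega)).trans (hlt n (by omega)).le
      · have : a = n + 1 := by omega
        subst this; rfl
  -- covering
  have hcov : ∀ v : ℝ, 0 ≤ v → v ≤ 1 → ∃ k < N, x k ≤ v ∧ v < x (k+1) := by
    intro v hv0 hv1
    have hex : ∃ n, v < x n := ⟨N, lt_of_le_of_lt hv1 hxNgt⟩
    have hk0N : Nat.find hex ≤ N := Nat.find_le (lt_of_le_of_lt hv1 hxNgt)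
    have hk0pos : Nat.find hex ≠ 0 := by
      intro h0
      have := Nat.find_spec hex
      rw [h0, hx0] at this
      linarith
    obtain ⟨k, hk⟩ := Nat.exists_eq_succ_of_ne_zero hk0pos
    refine ⟨k, by omega, ?_, ?_⟩
    · have := Nat.find_min hex (m := k) (by omega)
      push_neg at this
      exact this
    · have := Nat.find_spec hex
      rwa [hk] at this
  -- the bad set is covered by boundary events
  set J : Finset ℕ := Finset.Icc 1 (N-1) with hJdef
  have hsub : {ω | ¬ ∃ k < N, X ω ∈ Ico (x k) (x (k + 1)) ∧ Z ω ∈ Ico (x k) (x (k + 1))}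
      ⊆ ⋃ j ∈ J, {ω | x j ∈ Ioc (L ω) (M ω)} := by
    intro ω hω
    simp only [mem_setOf_eq] at hω
    obtain ⟨kx, hkxN, hkx1, hkx2⟩ := hcov (X ω) (hXr ω).1 (hXr ω).2
    obtain ⟨kz, hkzN, hkz1, hkz2⟩ := hcov (Z ω) (hZr ω).1 (hZr ω).2
    have hne : kx ≠ kz := by
      rintro rfl
      exact hω ⟨kx, hkxN, ⟨hkx1, hkx2⟩, ⟨hkz1, hkz2⟩⟩
    rcases Ne.lt_or_gt hne with hlt' | hlt'
    · refine Set.mem_biUnion (show kx + 1 ∈ J by rw [hJdef]; simp only [Finset.mem_Icc]; omega) ?_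
      simp only [mem_setOf_eq, mem_Ioc]
      constructor
      · exact lt_of_le_of_lt (min_le_left _ _) hkx2
      · exact le_trans (le_trans (hmon kz (by omega) (kx+1) (by omega)) hkz1) (le_max_right _ _)
    · refine Set.mem_biUnion (show kz + 1 ∈ J by rw [hJdef]; simp only [Finset.mem_Icc]; omega) ?_
      simp only [mem_setOf_eq, mem_Ioc]
      constructor
      · exact lt_of_le_of_lt (min_le_right _ _) hkz2
      · exact le_trans (le_trans (hmon kx (by omega) (kz+1) (by omega)) hkx1) (le_max_left _ _)
  -- disjointness of the intervals
  have hdisj : Set.PairwiseDisjoint (↑J) I := by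
    intro a ha b hb hab
    have key : ∀ c d : ℕ, c < d → Disjoint (I c) (I d) := by
      intro c d hcd
      rw [hIdef]
      rw [Set.Ioc_disjoint_Ioc]
      refine le_trans (min_le_left _ _) (le_trans ?_ (le_max_right _ _))
      have hcd' : (c:ℝ) + 1 ≤ d := by exact_mod_cast hcd
      have hp := mul_le_mul_of_nonneg_right hcd' hu0.le
      rw [add_mul, one_mul] at hp
      rw [h2Nu, div_eq_mul_one_div (c:ℝ) (N:ℝ), div_eq_mul_one_div (d:ℝ) (N:ℝ)]
      linarith
    rcases Ne.lt_or_gt hab with h | h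
    · exact key a b h
    · exact (key b a h).symm
  -- the sum bound
  have hsum : ∑ j ∈ J, (∫⁻ u in I j, f u ∂volume) ≤ ENNReal.ofReal (Real.sqrt ε) := by
    rw [← lintegral_biUnion_finset hdisj (fun j _ => measurableSet_Ioc)]
    exact le_trans (setLIntegral_le_lintegral _ _) (htonelli ▸ hCS)
  -- putting it all together
  have hmain : μ {ω | ¬ ∃ k < N, X ω ∈ Ico (x k) (x (k + 1)) ∧ Z ω ∈ Ico (x k) (x (k + 1))}
      ≤ ENNReal.ofReal (Real.sqrt ε * N) := by
    calc μ {ω | ¬ ∃ k < N, X ω ∈ Ico (x k) (x (k + 1)) ∧ Z ω ∈ Ico (x k) (x (k + 1))}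
        ≤ μ (⋃ j ∈ J, {ω | x j ∈ Ioc (L ω) (M ω)}) := measure_mono hsub
      _ ≤ ∑ j ∈ J, μ {ω | x j ∈ Ioc (L ω) (M ω)} := measure_biUnion_finset_le _ _
      _ ≤ ∑ j ∈ J, (N : ENNReal) * ∫⁻ u in I j, f u ∂volume := by
          refine Finset.sum_le_sum fun j hj => ?_
          rw [hJdef] at hj
          simp only [Finset.mem_Icc] at hj
          rw [show {ω | x j ∈ Ioc (L ω) (M ω)} = {ω | t j ∈ Ioc (L ω) (M ω)} by
            rw [hxmid j hj.1 hj.2]]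
          exact hkey j
      _ = (N : ENNReal) * ∑ j ∈ J, (∫⁻ u in I j, f u ∂volume) := by
          rw [Finset.mul_sum]
      _ ≤ (N : ENNReal) * ENNReal.ofReal (Real.sqrt ε) := by
          exact mul_le_mul_right hsum _
      _ = ENNReal.ofReal (Real.sqrt ε * N) := by
          rw [ENNReal.ofReal_mul (Real.sqrt_nonneg _), ENNReal.ofReal_natCast, mul_comm]
  refine ⟨x, hx0, hxNgt, hlt, hloc, hlen, ?_⟩
  exact ENNReal.toReal_le_of_le_ofReal (by positivity) hmain
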